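/- Let ‖·‖ be a norm on ℝⁿ invariant under coordinate permutations (not necessarily under sign changes). Then for all nonnegative vectors f, g ∈ ℝ₊ⁿ, ‖fg − E(fg)‖ ≤ ‖g‖_∞ ‖f − E f‖ + ‖f‖_∞ ‖g − E g‖. -/

import Mathlib

open Finset

/-- The symmetric matrix `Θ_x`: off-diagonal entries `(xᵢ+xⱼ)/(2n)`, diagonal chosen
so that every row sums to zero. -/
noncomputable def Theta (n : ℕ) (x : Fin n → ℝ) : Matrix (Fin n) (Fin n) ℝ :=
  fun i j =>
    if i = j then -(∑ k ∈ Finset.univ.erase i, (x i + x k) / (2 * n))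
    else (x i + x j) / (2 * n)

/-- `I_x = Iₙ + Θ_x`. -/
noncomputable def Imat (n : ℕ) (x : Fin n → ℝ) : Matrix (Fin n) (Fin n) ℝ :=
  1 + Theta n x

/-- `E f`: the constant vector whose entries all equal the mean of `f`. -/
noncomputable def meanVec (n : ℕ) (f : Fin n → ℝ) : Fin n → ℝ :=
  fun _ => (∑ i, f i) / n

/-- The sup norm `‖x‖_∞`. -/
noncomputable def linf (n : ℕ) (x : Fin n → ℝ) : ℝ :=
  sSup (Set.range fun i => |x i|)

/-- The Ky Fan `k`-norm: the sum of the `k` largest absolute values of the entries,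
i.e. the maximum of `∑_{i ∈ S} |xᵢ|` over subsets `S` of cardinality `k`. -/
noncomputable def kyFan (n k : ℕ) (x : Fin n → ℝ) : ℝ :=
  sSup ((fun S : Finset (Fin n) => ∑ i ∈ S, |x i|) '' {S | S.card = k})

/-- The dual Ky Fan `k`-norm: `max(‖x‖_∞, ‖x‖₁ / k)`. -/
noncomputable def kyFanDual (n k : ℕ) (x : Fin n → ℝ) : ℝ :=
  max (linf n x) ((∑ i, |x i|) / k)

/-- A symmetric norm on `ℝⁿ`: a norm invariant under coordinate permutations
and sign changes. -/
structure IsSymmNorm (n : ℕ) (N : (Fin n → ℝ) → ℝ) : Prop where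
  add_le : ∀ x y, N (x + y) ≤ N x + N y
  smul : ∀ (c : ℝ) (x), N (c • x) = |c| * N x
  pos : ∀ x, x ≠ 0 → 0 < N x
  perm : ∀ (σ : Equiv.Perm (Fin n)) (x), N (x ∘ σ) = N x
  sign : ∀ (ε x : Fin n → ℝ), (∀ i, ε i = 1 ∨ ε i = -1) → N (ε * x) = N x

/-- A norm on `ℝⁿ` invariant under coordinate permutations (not necessarily under
sign changes). -/
structure IsPermNorm (n : ℕ) (N : (Fin n → ℝ) → ℝ) : Prop where
  add_le : ∀ x y, N (x + y) ≤ N x + N y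
  smul : ∀ (c : ℝ) (x), N (c • x) = |c| * N x
  pos : ∀ x, x ≠ 0 → 0 < N x
  perm : ∀ (σ : Equiv.Perm (Fin n)) (x), N (x ∘ σ) = N x


section Aux

open Matrix

variable {n : ℕ} {N : (Fin n → ℝ) → ℝ}

lemma theta_apply_ne (x : Fin n → ℝ) {i j : Fin n} (h : i ≠ j) :
    Theta n x i j = (x i + x j) / (2 * n) := if_neg h

lemma theta_apply_eq (x : Fin n → ℝ) (i : Fin n) :
    Theta n x i i = -(∑ k ∈ Finset.univ.erase i, (x i + x k) / (2 * n)) := if_pos rfl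

lemma theta_symm (x : Fin n → ℝ) (i j : Fin n) : Theta n x i j = Theta n x j i := by
  rcases eq_or_ne i j with rfl | h
  · rfl
  · rw [theta_apply_ne x h, theta_apply_ne x h.symm]; ring

lemma theta_row_sum (x : Fin n → ℝ) (i : Fin n) : ∑ j, Theta n x i j = 0 := by
  rw [← Finset.add_sum_erase _ _ (Finset.mem_univ i),
      Finset.sum_congr rfl (fun j hj => theta_apply_ne x (Finset.ne_of_mem_erase hj).symm),
      theta_apply_eq]
  ring

lemma theta_mulVec (x u : Fin n → ℝ) (i : Fin n) :
    (Theta n x *ᵥ u) i = ∑ j, (x i + x j) / (2 * n) * (u j - u i) := by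
  have h0 : (x i + x i) / (2 * (n : ℝ)) * (u i - u i) = 0 := by ring
  rw [show (∑ j, (x i + x j) / (2 * (n : ℝ)) * (u j - u i))
      = ∑ j ∈ Finset.univ.erase i, (x i + x j) / (2 * (n : ℝ)) * (u j - u i) from
    (Finset.sum_erase (f := fun j => (x i + x j) / (2 * (n : ℝ)) * (u j - u i))
      Finset.univ h0).symm]
  simp only [Matrix.mulVec, dotProduct]
  rw [← Finset.add_sum_erase _ _ (Finset.mem_univ i),
      Finset.sum_congr rfl
        (fun j hj => by rw [theta_apply_ne x (Finset.ne_of_mem_erase hj).symm]),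
      theta_apply_eq]
  simp only [mul_sub, Finset.sum_sub_distrib, ← Finset.sum_mul]
  ring

lemma permNorm_zero (hN : IsPermNorm n N) : N 0 = 0 := by
  have := hN.smul 0 0
  simpa using this

lemma permNorm_nonneg (hN : IsPermNorm n N) (x : Fin n → ℝ) : 0 ≤ N x := by
  have h1 := hN.add_le x (-x)
  have h2 : N (-x) = N x := by
    have := hN.smul (-1) x
    simpa using this
  rw [add_neg_cancel, permNorm_zero hN] at h1
  linarith

lemma permMatrix_mulVec (σ : Equiv.Perm (Fin n)) (u : Fin n → ℝ) :
    σ.permMatrix ℝ *ᵥ u = u ∘ σ := by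
  funext i
  simp [Matrix.mulVec, dotProduct, Equiv.Perm.permMatrix, PEquiv.toMatrix_apply,
    Equiv.toPEquiv_apply, Option.mem_def, eq_comm]

lemma N_sum_smul_le {ι : Type*} (hN : IsPermNorm n N) (s : Finset ι) (w : ι → ℝ)
    (y : ι → Fin n → ℝ) (hw : ∀ i ∈ s, 0 ≤ w i) :
    N (∑ i ∈ s, w i • y i) ≤ ∑ i ∈ s, w i * N (y i) := by
  classical
  induction s using Finset.cons_induction with
  | empty => simp [permNorm_zero hN]
  | cons a s ha ih =>
    rw [Finset.sum_cons, Finset.sum_cons]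
    refine le_trans (hN.add_le _ _)
      (add_le_add ?_ (ih fun i hi => hw i (Finset.mem_cons_of_mem hi)))
    rw [hN.smul, abs_of_nonneg (hw a (Finset.mem_cons_self a s))]

lemma contraction (hN : IsPermNorm n N) (M : Matrix (Fin n) (Fin n) ℝ)
    (hM : M ∈ doublyStochastic ℝ (Fin n)) (u : Fin n → ℝ) : N (M *ᵥ u) ≤ N u := by
  obtain ⟨w, hw0, hw1, hwM⟩ := exists_eq_sum_perm_of_mem_doublyStochastic hM
  have h : M *ᵥ u = ∑ σ : Equiv.Perm (Fin n), w σ • (u ∘ σ) := by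
    rw [← hwM]
    funext i
    simp only [Matrix.mulVec, dotProduct, Matrix.sum_apply, Matrix.smul_apply, smul_eq_mul,
      Finset.sum_mul, Finset.sum_apply, Pi.smul_apply, Function.comp_apply]
    rw [Finset.sum_comm]
    refine Finset.sum_congr rfl fun σ _ => ?_
    have h2 := congrFun (permMatrix_mulVec σ u) i
    simp only [Matrix.mulVec, dotProduct, Function.comp_apply] at h2
    rw [← h2, Finset.mul_sum]
    exact Finset.sum_congr rfl fun j _ => by ring
  rw [h]
  calc N (∑ σ : Equiv.Perm (Fin n), w σ • (u ∘ σ))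
      ≤ ∑ σ : Equiv.Perm (Fin n), w σ * N (u ∘ σ) :=
        N_sum_smul_le hN _ _ _ fun σ _ => hw0 σ
    _ = ∑ σ : Equiv.Perm (Fin n), w σ * N u := by
        refine Finset.sum_congr rfl fun σ _ => ?_
        rw [hN.perm]
    _ = N u := by rw [← Finset.sum_mul, hw1, one_mul]

lemma Imat_mem (hn : 0 < n) (x : Fin n → ℝ) (h0 : ∀ i, 0 ≤ x i) (h1 : ∀ i, x i ≤ 1) :
    Imat n x ∈ doublyStochastic ℝ (Fin n) := by
  have hn' : (0 : ℝ) < n := by exact_mod_cast hn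
  rw [mem_doublyStochastic_iff_sum]
  have hrow : ∀ i, ∑ j, Imat n x i j = 1 := by
    intro i
    simp only [Imat, Matrix.add_apply, Finset.sum_add_distrib, theta_row_sum, add_zero]
    simp [Matrix.one_apply]
  refine ⟨?_, hrow, ?_⟩
  · intro i j
    rcases eq_or_ne i j with rfl | hij
    · simp only [Imat, Matrix.add_apply, Matrix.one_apply_eq, theta_apply_eq]
      have hb : ∑ k ∈ Finset.univ.erase i, (x i + x k) / (2 * (n : ℝ)) ≤ 1 := by
        calc ∑ k ∈ Finset.univ.erase i, (x i + x k) / (2 * (n : ℝ))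
            ≤ ∑ _k ∈ Finset.univ.erase i, 1 / (n : ℝ) := by
              refine Finset.sum_le_sum fun k _ => ?_
              rw [div_le_div_iff₀ (by positivity) hn']
              nlinarith [h0 i, h0 k, h1 i, h1 k]
          _ = ((Finset.univ.erase i).card : ℝ) * (1 / (n : ℝ)) := by
              rw [Finset.sum_const, nsmul_eq_mul]
          _ ≤ (n : ℝ) * (1 / (n : ℝ)) := by
              have : ((Finset.univ.erase i).card : ℝ) ≤ (n : ℝ) := by
                have := Finset.card_erase_le (a := i) (s := (Finset.univ : Finset (Fin n)))
                have h2 : (Finset.univ : Finset (Fin n)).card = n := by simp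
                exact_mod_cast le_trans this (le_of_eq h2)
              gcongr
          _ = 1 := by field_simp
      linarith
    · rw [Imat, Matrix.add_apply, Matrix.one_apply_ne hij, theta_apply_ne x hij, zero_add]
      apply div_nonneg _ (by positivity)
      linarith [h0 i, h0 j]
  · intro j
    rw [Finset.sum_congr rfl fun i _ => (by
      simp [Imat, Matrix.add_apply, theta_symm x i j, Matrix.one_apply, eq_comm] :
        Imat n x i j = Imat n x j i)]
    exact hrow j

lemma key_identity (hn : 0 < n) (f g : Fin n → ℝ) :
    f * g - meanVec n (f * g)
      = Imat n (1 - g) *ᵥ (f - meanVec n f) + Imat n (1 - f) *ᵥ (g - meanVec n g) := by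
  have hn' : (n : ℝ) ≠ 0 := by positivity
  funext i
  simp only [Imat, Matrix.add_mulVec, Matrix.one_mulVec, Pi.add_apply, Pi.sub_apply,
    Pi.mul_apply, meanVec]
  rw [theta_mulVec, theta_mulVec]
  have hsum : ∀ (x u : Fin n → ℝ), ∑ j, (x i + x j) / (2 * (n : ℝ)) * (u j - u i)
      = (x i * (∑ j, u j) + (∑ j, x j * u j) - (n : ℝ) * (x i * u i)
          - (∑ j, x j) * u i) / (2 * n) := by
    intro x u
    rw [Finset.sum_congr rfl (fun j _ => div_mul_eq_mul_div _ _ _), ← Finset.sum_div]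
    congr 1
    simp only [add_mul, mul_sub, Finset.sum_add_distrib, Finset.sum_sub_distrib,
      ← Finset.mul_sum, ← Finset.sum_mul, Finset.sum_const, Finset.card_univ,
      Fintype.card_fin, nsmul_eq_mul]
    ring
  rw [hsum, hsum]
  simp only [Pi.sub_apply, Pi.one_apply, Pi.mul_apply, meanVec]
  have e0 : ∀ h : Fin n → ℝ, ∑ j, (h j - (∑ k, h k) / (n : ℝ)) = 0 := by
    intro h
    rw [Finset.sum_sub_distrib, Finset.sum_const, Finset.card_univ, Fintype.card_fin,
      nsmul_eq_mul, mul_div_cancel₀ _ hn', sub_self]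
  have e1 : ∀ p : Fin n → ℝ, ∑ j, ((1 : ℝ) - p j) = (n : ℝ) - ∑ j, p j := by
    intro p
    rw [Finset.sum_sub_distrib, Finset.sum_const, Finset.card_univ, Fintype.card_fin,
      nsmul_eq_mul, mul_one]
  have e2 : ∀ p q : Fin n → ℝ, ∑ j, ((1 : ℝ) - p j) * (q j - (∑ k, q k) / (n : ℝ))
      = (∑ k, p k) * ((∑ k, q k) / (n : ℝ)) - ∑ j, p j * q j := by
    intro p q
    rw [Finset.sum_congr rfl (fun j _ => show ((1 : ℝ) - p j) * (q j - (∑ k, q k) / (n : ℝ))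
        = (q j - (∑ k, q k) / (n : ℝ)) - p j * q j + p j * ((∑ k, q k) / (n : ℝ)) by ring)]
    rw [Finset.sum_add_distrib, Finset.sum_sub_distrib, e0, ← Finset.sum_mul, zero_sub]
    ring
  rw [e0, e0, e1, e1, e2, e2]
  have ecomm : ∑ j, g j * f j = ∑ j, f j * g j :=
    Finset.sum_congr rfl fun j _ => mul_comm _ _
  rw [ecomm]
  field_simp
  ring

lemma le_linf (x : Fin n → ℝ) (i : Fin n) : |x i| ≤ linf n x :=
  le_csSup (Set.Finite.bddAbove (Set.finite_range _)) ⟨i, rfl⟩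

lemma core_ineq (hn : 0 < n) (hN : IsPermNorm n N) (f g : Fin n → ℝ)
    (hf0 : ∀ i, 0 ≤ f i) (hf1 : ∀ i, f i ≤ 1) (hg0 : ∀ i, 0 ≤ g i) (hg1 : ∀ i, g i ≤ 1) :
    N (f * g - meanVec n (f * g)) ≤ N (f - meanVec n f) + N (g - meanVec n g) := by
  rw [key_identity hn f g]
  refine le_trans (hN.add_le _ _) (add_le_add ?_ ?_)
  · exact contraction hN _ (Imat_mem hn _ (fun i => by simp; linarith [hg1 i])
      (fun i => by simp; linarith [hg0 i])) _
  · exact contraction hN _ (Imat_mem hn _ (fun i => by simp; linarith [hf1 i])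
      (fun i => by simp; linarith [hf0 i])) _

lemma meanVec_smul (c : ℝ) (h : Fin n → ℝ) : meanVec n (c • h) = c • meanVec n h := by
  funext i
  simp only [meanVec, Pi.smul_apply, smul_eq_mul, ← Finset.mul_sum]
  ring

end Aux

/-- Theorem 2.8: the Leibniz inequality for permutation invariant norms and
nonnegative vectors. -/
theorem stmt_8 (n : ℕ) (hn : 0 < n) (N : (Fin n → ℝ) → ℝ) (hN : IsPermNorm n N)
    (f g : Fin n → ℝ) (hf : ∀ i, 0 ≤ f i) (hg : ∀ i, 0 ≤ g i) :
    N (f * g - meanVec n (f * g))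
      ≤ linf n g * N (f - meanVec n f) + linf n f * N (g - meanVec n g) := by
  have hNz := permNorm_zero hN
  have hm0 : meanVec n (0 : Fin n → ℝ) = 0 := by funext i; simp [meanVec]
  rcases eq_or_ne (linf n f) 0 with ha | ha
  · have hf0 : f = 0 := funext fun i =>
      abs_eq_zero.mp (le_antisymm (ha ▸ le_linf f i) (abs_nonneg _))
    rw [hf0] at ha ⊢
    rw [show (0 : Fin n → ℝ) * g = 0 from funext fun i => by simp, hm0, sub_zero, hNz, ha]
    simp
  rcases eq_or_ne (linf n g) 0 with hb | hb
  · have hg0 : g = 0 := funext fun i =>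
      abs_eq_zero.mp (le_antisymm (hb ▸ le_linf g i) (abs_nonneg _))
    rw [hg0] at hb ⊢
    rw [show f * (0 : Fin n → ℝ) = 0 from funext fun i => by simp, hm0, sub_zero, hNz, hb]
    simp
  set a := linf n f with hadef
  set b := linf n g with hbdef
  have ha0 : 0 < a :=
    lt_of_le_of_ne (le_trans (abs_nonneg (f ⟨0, hn⟩)) (le_linf f ⟨0, hn⟩)) (Ne.symm ha)
  have hb0 : 0 < b :=
    lt_of_le_of_ne (le_trans (abs_nonneg (g ⟨0, hn⟩)) (le_linf g ⟨0, hn⟩)) (Ne.symm hb)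
  have hfle : ∀ i, f i ≤ a := fun i => le_trans (le_abs_self _) (le_linf f i)
  have hgle : ∀ i, g i ≤ b := fun i => le_trans (le_abs_self _) (le_linf g i)
  have hainv : (0 : ℝ) ≤ a⁻¹ := inv_nonneg.mpr ha0.le
  have hbinv : (0 : ℝ) ≤ b⁻¹ := inv_nonneg.mpr hb0.le
  have key := core_ineq hn hN (a⁻¹ • f) (b⁻¹ • g)
    (fun i => by
      simp only [Pi.smul_apply, smul_eq_mul]
      exact mul_nonneg hainv (hf i))
    (fun i => by
      simp only [Pi.smul_apply, smul_eq_mul]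
      calc a⁻¹ * f i ≤ a⁻¹ * a := mul_le_mul_of_nonneg_left (hfle i) hainv
        _ = 1 := inv_mul_cancel₀ ha0.ne')
    (fun i => by
      simp only [Pi.smul_apply, smul_eq_mul]
      exact mul_nonneg hbinv (hg i))
    (fun i => by
      simp only [Pi.smul_apply, smul_eq_mul]
      calc b⁻¹ * g i ≤ b⁻¹ * b := mul_le_mul_of_nonneg_left (hgle i) hbinv
        _ = 1 := inv_mul_cancel₀ hb0.ne')
  have hFG : (a⁻¹ • f) * (b⁻¹ • g) = (a⁻¹ * b⁻¹) • (f * g) := by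
    funext i
    simp only [Pi.mul_apply, Pi.smul_apply, smul_eq_mul]
    ring
  rw [hFG, meanVec_smul, ← smul_sub, meanVec_smul, ← smul_sub, meanVec_smul, ← smul_sub,
    hN.smul, hN.smul, hN.smul,
    abs_of_nonneg (mul_nonneg hainv hbinv), abs_of_nonneg hainv, abs_of_nonneg hbinv] at key
  calc N (f * g - meanVec n (f * g))
      = (a * b) * (a⁻¹ * b⁻¹ * N (f * g - meanVec n (f * g))) := by
        field_simp
    _ ≤ (a * b) * (a⁻¹ * N (f - meanVec n f) + b⁻¹ * N (g - meanVec n g)) :=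
        mul_le_mul_of_nonneg_left key (mul_pos ha0 hb0).le
    _ = b * N (f - meanVec n f) + a * N (g - meanVec n g) := by
        field_simp
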